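/- (Green zone for Sector I; Sections 4.2–4.4.) Fix p > 1 and let (N,D) lie in Sector I, i.e., −1 < N ≤ D ≤ 0. Then for every q with 0 ≤ q ≤ −N and every P' with N ≤ P' ≤ D, one has (N,D) ≫ (N+q, P'+q). -/
import Mathlib


open MeasureTheory

open ENNReal

set_option maxHeartbeats 2000000

lemma maj_aux (k : ℕ) {a x y z : ℝ} (hy0 : 0 ≤ y) (hyx : y ≤ x) (hxa : x ≤ a)
    (hz0 : 0 ≤ z) (hsum : x + y ≤ a + z) : x ^ k + y ^ k ≤ a ^ k + z ^ k := by
  rcases le_or_gt y z with h | h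
  · have h1 : x ^ k ≤ a ^ k := pow_le_pow_left₀ (le_trans hy0 hyx) hxa k
    have h2 : y ^ k ≤ z ^ k := pow_le_pow_left₀ hy0 h k
    linarith
  · -- z < y ≤ x ≤ a
    have key : y ^ k - z ^ k ≤ a ^ k - x ^ k := by
      have e1 : (∑ i ∈ Finset.range k, a ^ i * x ^ (k - 1 - i)) * (a - x) = a ^ k - x ^ k :=
        geom_sum₂_mul a x k
      have e2 : (∑ i ∈ Finset.range k, y ^ i * z ^ (k - 1 - i)) * (y - z) = y ^ k - z ^ k :=
        geom_sum₂_mul y z k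
      rw [← e1, ← e2]
      have hS : (∑ i ∈ Finset.range k, y ^ i * z ^ (k - 1 - i)) ≤
          (∑ i ∈ Finset.range k, a ^ i * x ^ (k - 1 - i)) := by
        apply Finset.sum_le_sum
        intro i _
        have : y ^ i ≤ a ^ i := pow_le_pow_left₀ hy0 (le_trans hyx hxa) i
        have h2 : z ^ (k-1-i) ≤ x ^ (k-1-i) := pow_le_pow_left₀ hz0 (le_trans h.le hyx) _
        exact mul_le_mul this h2 (pow_nonneg hz0 _) (pow_nonneg (by linarith : (0:ℝ) ≤ a) _)
      have hS0 : 0 ≤ ∑ i ∈ Finset.range k, y ^ i * z ^ (k - 1 - i) :=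
        Finset.sum_nonneg fun i _ => mul_nonneg (pow_nonneg hy0 _) (pow_nonneg hz0 _)
      have hyz : (0:ℝ) ≤ y - z := by linarith
      have hax : y - z ≤ a - x := by linarith
      calc (∑ i ∈ Finset.range k, y ^ i * z ^ (k - 1 - i)) * (y - z)
          ≤ (∑ i ∈ Finset.range k, a ^ i * x ^ (k - 1 - i)) * (y - z) :=
            mul_le_mul_of_nonneg_right hS hyz
        _ ≤ (∑ i ∈ Finset.range k, a ^ i * x ^ (k - 1 - i)) * (a - x) :=
            mul_le_mul_of_nonneg_left hax (le_trans hS0 hS)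
    linarith

/-- symmetric version. -/
lemma maj_aux' (k : ℕ) {a x y z : ℝ} (hx0 : 0 ≤ x) (hy0 : 0 ≤ y) (hxa : x ≤ a) (hya : y ≤ a)
    (hz0 : 0 ≤ z) (hsum : x + y ≤ a + z) : x ^ k + y ^ k ≤ a ^ k + z ^ k := by
  rcases le_total y x with h | h
  · exact maj_aux k hy0 h hxa hz0 hsum
  · have := maj_aux k hx0 h hya hz0 (by linarith)
    linarith

lemma three_pow (k : ℕ) (hk : 1 ≤ k) {a x y z : ℝ} (hx0 : 0 ≤ x) (hy0 : 0 ≤ y) (hz0 : 0 ≤ z)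
    (hsum : x + y + z ≤ a) : x ^ k + y ^ k + z ^ k ≤ a ^ k := by
  have ha : 0 ≤ a := by linarith
  obtain ⟨m, rfl⟩ := Nat.exists_eq_add_of_le hk
  have hb : ∀ w : ℝ, 0 ≤ w → w ≤ a → w ^ (1 + m) ≤ w * a ^ m := by
    intro w hw hwa
    rw [pow_add, pow_one]
    exact mul_le_mul_of_nonneg_left (pow_le_pow_left₀ hw hwa m) hw
  have h1 := hb x hx0 (by linarith)
  have h2 := hb y hy0 (by linarith)
  have h3 := hb z hz0 (by linarith)
  have : x * a ^ m + y * a ^ m + z * a ^ m ≤ a * a ^ m := by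
    have := pow_nonneg ha m
    nlinarith
  calc x ^ (1+m) + y ^ (1+m) + z ^ (1+m) ≤ a * a ^ m := by linarith
    _ = a ^ (1+m) := by rw [pow_add, pow_one]

/-- The central coefficient inequality:  `d^k + (a-q)^k ≤ a^k + (b-q)^k`. -/
lemma coeff_ineq (k : ℕ) (hk : 1 ≤ k) {a b d q : ℝ} (hd0 : 0 ≤ d) (hdb : d ≤ b) (hba : b ≤ a)
    (hq0 : 0 ≤ q) (hqa : q ≤ a) : d ^ k + (a - q) ^ k ≤ a ^ k + (b - q) ^ k := by
  rcases le_or_gt q b with h | h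
  · exact maj_aux' k hd0 (by linarith) (by linarith) (by linarith) (by linarith) (by linarith)
  · rcases Nat.even_or_odd k with he | ho
    · have : (b - q) ^ k = (q - b) ^ k := by
        rw [show b - q = -(q-b) by ring, he.neg_pow]
      rw [this]
      exact maj_aux' k hd0 (by linarith) (by linarith) (by linarith) (by linarith) (by linarith)
    · have : (b - q) ^ k = -((q - b) ^ k) := by
        rw [show b - q = -(q-b) by ring, ho.neg_pow]
      rw [this]
      have := three_pow k hk hd0 (by linarith : (0:ℝ) ≤ a - q) (by linarith : (0:ℝ) ≤ q - b)
        (by linarith : d + (a - q) + (q - b) ≤ a)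
      linarith



lemma K2 (u : ℕ → ℝ≥0∞) : ∀ j : ℕ, ∑' f : Fin j → ℕ, ∏ i, u (f i) = (∑' k, u k) ^ j := by
  intro j
  induction j with
  | zero =>
    rw [pow_zero]
    rw [tsum_eq_single (fun i => i.elim0) (by intro b hb; exact absurd (Subsingleton.elim b _) hb)]
    simp
  | succ j ih =>
    rw [← Equiv.tsum_eq (Fin.consEquiv (fun _ : Fin (j+1) => ℕ))]
    have : ∀ p : ℕ × (Fin j → ℕ),
        (∏ i, u ((Fin.consEquiv (fun _ : Fin (j+1) => ℕ)) p i)) = u p.1 * ∏ i, u (p.2 i) := by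
      intro p
      simp [Fin.prod_univ_succ]
    rw [tsum_congr this, ENNReal.tsum_prod']
    have : ∀ k : ℕ, ∑' f : Fin j → ℕ, u k * ∏ i, u (f i) = u k * (∑' k, u k) ^ j := by
      intro k; rw [ENNReal.tsum_mul_left, ih]
    rw [tsum_congr this, ENNReal.tsum_mul_right, pow_succ, mul_comm]

lemma K1 (u : ℕ → ℝ≥0∞) :
    ∑' L : List ℕ, (L.map u).prod * ((L.length.factorial : ℝ≥0∞))⁻¹
      = ∑' j : ℕ, (∑' k, u k) ^ j * ((j.factorial : ℝ≥0∞))⁻¹ := by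
  rw [← Equiv.tsum_eq (List.equivSigmaTuple (α := ℕ)).symm
    (fun L => (L.map u).prod * ((L.length.factorial : ℝ≥0∞))⁻¹)]
  rw [ENNReal.tsum_sigma']
  congr 1
  ext j
  have : ∀ f : Fin j → ℕ,
      ((List.equivSigmaTuple (α := ℕ)).symm ⟨j, f⟩ |>.map u).prod
        * ((((List.equivSigmaTuple (α := ℕ)).symm ⟨j, f⟩).length.factorial : ℝ≥0∞))⁻¹
      = (∏ i, u (f i)) * ((j.factorial : ℝ≥0∞))⁻¹ := by
    intro f
    simp [List.equivSigmaTuple, List.map_ofFn, List.prod_ofFn, Function.comp]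
  rw [tsum_congr this, ENNReal.tsum_mul_right, K2]

lemma list_prod_ofReal (v : ℕ → ℝ) (hv : ∀ k, 0 ≤ v k) :
    ∀ L : List ℕ, ENNReal.ofReal ((L.map v).prod) = (L.map (fun k => ENNReal.ofReal (v k))).prod := by
  intro L
  induction L with
  | nil => simp
  | cons a L ih =>
    have h1 : (0:ℝ) ≤ (L.map v).prod := List.prod_nonneg (by
      intro x hx
      obtain ⟨k, _, rfl⟩ := List.mem_map.mp hx
      exact hv k)
    simp only [List.map_cons, List.prod_cons, ENNReal.ofReal_mul (hv a), ih]

lemma list_prod_nonneg (v : ℕ → ℝ) (hv : ∀ k, 0 ≤ v k) (L : List ℕ) : 0 ≤ (L.map v).prod :=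
  List.prod_nonneg (by
    intro x hx
    obtain ⟨k, _, rfl⟩ := List.mem_map.mp hx
    exact hv k)

/-- The main exponential identity over lists, ENNReal version. -/
lemma K4 (v : ℕ → ℝ) (hv : ∀ k, 0 ≤ v k) (hs : Summable v) :
    ∑' L : List ℕ, ENNReal.ofReal ((L.map v).prod / (L.length.factorial))
      = ENNReal.ofReal (Real.exp (∑' k, v k)) := by
  have hof : ∀ L : List ℕ, ENNReal.ofReal ((L.map v).prod / (L.length.factorial))
      = ((L.map (fun k => ENNReal.ofReal (v k))).prod) * ((L.length.factorial : ℝ≥0∞))⁻¹ := by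
    intro L
    rw [div_eq_mul_inv, ENNReal.ofReal_mul (list_prod_nonneg v hv L), list_prod_ofReal v hv,
      ENNReal.ofReal_inv_of_pos (by positivity)]
    congr
    simp [ENNReal.ofReal_natCast]
  rw [tsum_congr hof, K1]
  have hT : ∑' k, ENNReal.ofReal (v k) = ENNReal.ofReal (∑' k, v k) :=
    (ENNReal.ofReal_tsum_of_nonneg hv hs).symm
  rw [hT]
  set t := ∑' k, v k with ht
  have ht0 : 0 ≤ t := tsum_nonneg hv
  have hterm : ∀ j : ℕ, ENNReal.ofReal t ^ j * ((j.factorial : ℝ≥0∞))⁻¹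
      = ENNReal.ofReal (t ^ j / (j.factorial)) := by
    intro j
    rw [div_eq_mul_inv, ENNReal.ofReal_mul (by positivity), ← ENNReal.ofReal_pow ht0,
      ENNReal.ofReal_inv_of_pos (by positivity)]
    congr
    simp [ENNReal.ofReal_natCast]
  rw [tsum_congr hterm, ← ENNReal.ofReal_tsum_of_nonneg (fun j => by positivity)
    (Real.summable_pow_div_factorial t)]
  congr 1
  rw [Real.exp_eq_exp_ℝ, NormedSpace.exp_eq_tsum_div]

/-- Real version of the exponential list identity. -/
lemma K5 (v : ℕ → ℝ) (hv : ∀ k, 0 ≤ v k) (hs : Summable v) :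
    Summable (fun L : List ℕ => (L.map v).prod / (L.length.factorial)) ∧
    ∑' L : List ℕ, (L.map v).prod / (L.length.factorial) = Real.exp (∑' k, v k) := by
  have h4 := K4 v hv hs
  have hW0 : ∀ L : List ℕ, 0 ≤ (L.map v).prod / (L.length.factorial) := by
    intro L
    have := list_prod_nonneg v hv L
    positivity
  have hne : ∑' L : List ℕ, ENNReal.ofReal ((L.map v).prod / (L.length.factorial)) ≠ ⊤ := by
    rw [h4]; exact ENNReal.ofReal_ne_top
  constructor
  · have := ENNReal.summable_toReal hne
    refine this.congr ?_
    intro L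
    rw [ENNReal.toReal_ofReal (hW0 L)]
  · have := ENNReal.tsum_toReal_eq (f := fun L : List ℕ =>
      ENNReal.ofReal ((L.map v).prod / (L.length.factorial))) (fun L => ENNReal.ofReal_ne_top)
    rw [h4, ENNReal.toReal_ofReal (Real.exp_nonneg _)] at this
    rw [this]
    exact tsum_congr fun L => (ENNReal.toReal_ofReal (hW0 L)).symm

lemma list_prod_mem_Icc (y : ℕ → ℝ) (hy0 : ∀ k, 0 ≤ y k) (hy1 : ∀ k, y k ≤ 1) (L : List ℕ) :
    (L.map y).prod ∈ Set.Icc (0:ℝ) 1 := by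
  induction L with
  | nil => simp
  | cons a L ih =>
    simp only [List.map_cons, List.prod_cons]
    constructor
    · exact mul_nonneg (hy0 a) ih.1
    · calc y a * (L.map y).prod ≤ 1 * 1 :=
        mul_le_mul (hy1 a) ih.2 ih.1 zero_le_one
      _ = 1 := one_mul 1

lemma list_prod_mul_pow (b y : ℕ → ℝ) (n : ℕ) (L : List ℕ) :
    (L.map b).prod * ((L.map y).prod) ^ n = (L.map (fun k => b k * y k ^ n)).prod := by
  induction L with
  | nil => simp
  | cons a L ih =>
    simp only [List.map_cons, List.prod_cons, mul_pow]
    rw [← ih]; ring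

/-- CORE: the moment sequence `n ↦ C · exp (∑ₖ bₖ yₖⁿ)` has a Berger measure. -/
lemma core_measure (C : ℝ) (hC : 0 ≤ C) (b : ℕ → ℝ) (hb0 : ∀ k, 0 ≤ b k) (hbs : Summable b)
    (y : ℕ → ℝ) (hy0 : ∀ k, 0 ≤ y k) (hy1 : ∀ k, y k ≤ 1) :
    ∃ μ : Measure ℝ, IsFiniteMeasure μ ∧
      (∃ K : Set ℝ, IsCompact K ∧ K ⊆ Set.Ici (0 : ℝ) ∧ μ Kᶜ = 0) ∧
      ∀ n : ℕ, ∫ x, x ^ n ∂μ = C * Real.exp (∑' k, b k * y k ^ n) := by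
  classical
  set W : List ℕ → ℝ := fun L => (L.map b).prod / (L.length.factorial) with hW
  set X : List ℕ → ℝ := fun L => (L.map y).prod with hX
  have hW0 : ∀ L, 0 ≤ W L := fun L => by
    have := list_prod_nonneg b hb0 L
    positivity
  have hX01 : ∀ L, X L ∈ Set.Icc (0:ℝ) 1 := list_prod_mem_Icc y hy0 hy1
  set μ : Measure ℝ :=
    Measure.sum (fun L : List ℕ => (ENNReal.ofReal (C * W L)) • Measure.dirac (X L)) with hμ
  -- the ENNReal total mass is finite
  have hmass : ∑' L : List ℕ, ENNReal.ofReal (C * W L) ≠ ⊤ := by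
    have : ∀ L : List ℕ, ENNReal.ofReal (C * W L)
        = ENNReal.ofReal C * ENNReal.ofReal (W L) := fun L => ENNReal.ofReal_mul hC
    rw [tsum_congr this, ENNReal.tsum_mul_left, K4 b hb0 hbs]
    exact ENNReal.mul_ne_top ENNReal.ofReal_ne_top ENNReal.ofReal_ne_top
  have hμs : ∀ s : Set ℝ, MeasurableSet s →
      μ s = ∑' L : List ℕ, ENNReal.ofReal (C * W L) * Measure.dirac (X L) s := by
    intro s hs
    rw [hμ, Measure.sum_apply _ hs]
    exact tsum_congr fun L => rfl
  refine ⟨μ, ?_, ⟨Set.Icc 0 1, isCompact_Icc, fun x hx => hx.1, ?_⟩, ?_⟩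
  · constructor
    rw [hμs Set.univ MeasurableSet.univ]
    calc ∑' L : List ℕ, ENNReal.ofReal (C * W L) * Measure.dirac (X L) Set.univ
        = ∑' L : List ℕ, ENNReal.ofReal (C * W L) := by
          refine tsum_congr fun L => ?_
          simp
      _ < ⊤ := hmass.lt_top
  · rw [hμs _ (measurableSet_Icc).compl]
    have : ∀ L : List ℕ, ENNReal.ofReal (C * W L) * Measure.dirac (X L) (Set.Icc (0:ℝ) 1)ᶜ
        = 0 := by
      intro L
      rw [Measure.dirac_apply' _ (measurableSet_Icc).compl]
      rw [Set.indicator_of_notMem (by simp [hX01 L])]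
      · simp
    rw [tsum_congr this]; simp
  · intro n
    set vn : ℕ → ℝ := fun k => b k * y k ^ n with hvn
    have hvn0 : ∀ k, 0 ≤ vn k := fun k => mul_nonneg (hb0 k) (pow_nonneg (hy0 k) n)
    have hvns : Summable vn := by
      refine Summable.of_nonneg_of_le hvn0 (fun k => ?_) hbs
      calc vn k ≤ b k * 1 := by
            refine mul_le_mul_of_nonneg_left ?_ (hb0 k)
            exact pow_le_one₀ (hy0 k) (hy1 k)
        _ = b k := mul_one _
    obtain ⟨hsum5, htsum5⟩ := K5 vn hvn0 hvns
    -- integrability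
    have hmeas : StronglyMeasurable (fun x : ℝ => x ^ n) :=
      (continuous_pow n).stronglyMeasurable
    have hint : Integrable (fun x : ℝ => x ^ n) μ := by
      constructor
      · exact hmeas.aestronglyMeasurable
      · rw [hasFiniteIntegral_def, hμ, lintegral_sum_measure]
        have hb1 : ∀ L : List ℕ, ∫⁻ x, (‖x ^ n‖₊ : ℝ≥0∞)
            ∂((ENNReal.ofReal (C * W L)) • Measure.dirac (X L))
            ≤ ENNReal.ofReal (C * W L) := by
          intro L
          rw [lintegral_smul_measure, lintegral_dirac' _ (by measurability)]
          calc ENNReal.ofReal (C * W L) * (‖(X L) ^ n‖₊ : ℝ≥0∞)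
              ≤ ENNReal.ofReal (C * W L) * 1 := by
                refine mul_le_mul_right ?_ _
                rw [ENNReal.coe_le_one_iff]
                have h1 : ‖(X L) ^ n‖ ≤ 1 := by
                  rw [Real.norm_eq_abs, abs_pow]
                  refine pow_le_one₀ (abs_nonneg _) ?_
                  rw [abs_of_nonneg (hX01 L).1]; exact (hX01 L).2
                exact_mod_cast h1
            _ = ENNReal.ofReal (C * W L) := mul_one _
        calc ∑' L : List ℕ, ∫⁻ x, (‖x ^ n‖₊ : ℝ≥0∞)
              ∂((ENNReal.ofReal (C * W L)) • Measure.dirac (X L))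
            ≤ ∑' L : List ℕ, ENNReal.ofReal (C * W L) := ENNReal.tsum_le_tsum hb1
          _ < ⊤ := hmass.lt_top
    rw [hμ, integral_sum_measure (hμ ▸ hint)]
    have hterm : ∀ L : List ℕ, ∫ x, x ^ n ∂((ENNReal.ofReal (C * W L)) • Measure.dirac (X L))
        = C * ((L.map vn).prod / (L.length.factorial)) := by
      intro L
      rw [integral_smul_measure, integral_dirac' _ _ hmeas,
        ENNReal.toReal_ofReal (mul_nonneg hC (hW0 L))]
      show (C * W L) • (X L) ^ n = _
      rw [smul_eq_mul, hW, hX]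
      simp only []
      rw [mul_assoc, div_mul_eq_mul_div, list_prod_mul_pow b y n L]
    rw [tsum_congr hterm, tsum_mul_left, htsum5]

/-- The geometrically regular weight sequence `α_n(N,D) = √((pⁿ+N)/(pⁿ+D))`. -/
noncomputable def grws (p N D : ℝ) (n : ℕ) : ℝ :=
  Real.sqrt ((p ^ n + N) / (p ^ n + D))

/-- Moments of a weight sequence: `γ_0 = 1`, `γ_n = ∏_{j<n} w_j²`. -/
noncomputable def moments (w : ℕ → ℝ) (n : ℕ) : ℝ :=
  ∏ j ∈ Finset.range n, (w j) ^ 2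

/-- A bounded sequence of positive reals is a subnormal weight sequence if its
moment sequence is represented by a compactly supported Berger measure on `[0,∞)`. -/
def IsSubnormalWeight (w : ℕ → ℝ) : Prop :=
  (∀ n, 0 < w n) ∧ (∃ C : ℝ, ∀ n, w n ≤ C) ∧
  ∃ μ : Measure ℝ, IsFiniteMeasure μ ∧
    (∃ K : Set ℝ, IsCompact K ∧ K ⊆ Set.Ici (0 : ℝ) ∧ μ Kᶜ = 0) ∧
    ∀ n : ℕ, moments w n = ∫ x, x ^ n ∂μ

/-- Moment infinitely divisible weight sequence: every positive real power is subnormal. -/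
def IsMIDWeight (w : ℕ → ℝ) : Prop :=
  ∀ s : ℝ, 0 < s → IsSubnormalWeight (fun n => (w n) ^ s)

/-- `(N,D) ≫_s (M,P)`: the quotient weight is subnormal. -/
def SubnormalSubord (p N D M P : ℝ) : Prop :=
  IsSubnormalWeight (fun n => grws p N D n / grws p M P n)

/-- `(N,D) ≫ (M,P)`: the quotient weight is MID. -/
def MIDSubord (p N D M P : ℝ) : Prop :=
  IsMIDWeight (fun n => grws p N D n / grws p M P n)

/-- green zone for Sector I; Sections 4.2–4.4. -/
theorem green_zone_sectorI (p N D : ℝ) (hp : 1 < p)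
    (hN1 : -1 < N) (hND : N ≤ D) (hD0 : D ≤ 0) :
    ∀ q P' : ℝ, 0 ≤ q → q ≤ -N → N ≤ P' → P' ≤ D →
      MIDSubord p N D (N + q) (P' + q) := by
  intro q P' hq0 hqN hNP' hP'D s hs
  have hp0 : (0:ℝ) < p := lt_trans one_pos hp
  have hpn : ∀ m : ℕ, (1:ℝ) ≤ p ^ m := fun m => one_le_pow₀ hp.le
  set t : ℝ := p⁻¹ with htdef
  have ht0 : 0 < t := inv_pos.mpr hp0
  have ht1 : t < 1 := by
    rw [htdef]
    exact inv_lt_one_of_one_lt₀ hp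
  have htpow1 : ∀ m : ℕ, t ^ m ≤ 1 := fun m => pow_le_one₀ ht0.le ht1.le
  have htpm : ∀ m : ℕ, p ^ m * t ^ m = 1 := by
    intro m
    rw [htdef, ← mul_pow, mul_inv_cancel₀ (ne_of_gt hp0), one_pow]
  set r : ℝ := -N with hrdef
  have hN0 : N ≤ 0 := le_trans hND hD0
  have hr0 : 0 ≤ r := by rw [hrdef]; linarith
  have hr1 : r < 1 := by rw [hrdef]; linarith
  have hDb : |D| ≤ r := by rw [abs_le, hrdef]; constructor <;> linarith
  have hNb : |N| ≤ r := by rw [abs_le, hrdef]; constructor <;> linarith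
  have hNqb : |N + q| ≤ r := by rw [abs_le, hrdef]; constructor <;> linarith
  have hPqb : |P' + q| ≤ r := by rw [abs_le, hrdef]; constructor <;> linarith
  have hpos : ∀ (m : ℕ) (x : ℝ), |x| ≤ r → 0 < p ^ m + x := by
    intro m x hx
    have h1 := (abs_le.mp hx).1
    have := hpn m
    linarith
  have hupos : ∀ (m : ℕ) (x : ℝ), |x| ≤ r → 0 < 1 + x * t ^ m := by
    intro m x hx
    have h1 := (abs_le.mp hx).1
    have h2 : -x * t ^ m ≤ r * 1 := by
      apply mul_le_mul _ (htpow1 m) (pow_nonneg ht0.le m) hr0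
      · rw [← abs_neg] at hx; exact le_trans (le_abs_self _) hx
    nlinarith
  -- the squared quotient weight
  set c : ℕ → ℝ := fun m =>
    ((p ^ m + N) * (p ^ m + (P' + q))) / ((p ^ m + D) * (p ^ m + (N + q))) with hcdef
  have hc_pos : ∀ m, 0 < c m := by
    intro m
    exact div_pos (mul_pos (hpos m N hNb) (hpos m _ hPqb)) (mul_pos (hpos m D hDb) (hpos m _ hNqb))
  have hc_le1 : ∀ m, c m ≤ 1 := by
    intro m
    rw [hcdef]
    rw [div_le_one (mul_pos (hpos m D hDb) (hpos m _ hNqb))]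
    have hkey : (p ^ m + N) * (p ^ m + (P' + q)) - (p ^ m + D) * (p ^ m + (N + q))
        = (P' - D) * (p ^ m + N) + q * (N - D) := by ring
    have h1 : (P' - D) * (p ^ m + N) ≤ 0 :=
      mul_nonpos_of_nonpos_of_nonneg (by linarith) (hpos m N hNb).le
    have h2 : q * (N - D) ≤ 0 := mul_nonpos_of_nonneg_of_nonpos hq0 (by linarith)
    linarith
  set w : ℕ → ℝ := fun m => grws p N D m / grws p (N + q) (P' + q) m with hwdef
  have hw_pos : ∀ m, 0 < w m := by
    intro m
    rw [hwdef]
    apply div_pos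
    · exact Real.sqrt_pos.mpr (div_pos (hpos m N hNb) (hpos m D hDb))
    · exact Real.sqrt_pos.mpr (div_pos (hpos m _ hNqb) (hpos m _ hPqb))
  have hw_sq : ∀ m, (w m) ^ 2 = c m := by
    intro m
    have e1 : (0:ℝ) < p ^ m + N := hpos m N hNb
    have e2 : (0:ℝ) < p ^ m + D := hpos m D hDb
    have e3 : (0:ℝ) < p ^ m + (N + q) := hpos m _ hNqb
    have e4 : (0:ℝ) < p ^ m + (P' + q) := hpos m _ hPqb
    have hA : (0:ℝ) < (p ^ m + N) / (p ^ m + D) := div_pos e1 e2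
    have hB : (0:ℝ) < (p ^ m + (N + q)) / (p ^ m + (P' + q)) := div_pos e3 e4
    rw [hwdef]
    show (Real.sqrt ((p ^ m + N) / (p ^ m + D))
      / Real.sqrt ((p ^ m + (N + q)) / (p ^ m + (P' + q)))) ^ 2 = c m
    rw [div_pow, Real.sq_sqrt hA.le, Real.sq_sqrt hB.le, hcdef]
    rw [div_div_div_eq]
  have hw_le1 : ∀ m, w m ≤ 1 := by
    intro m
    nlinarith [hw_sq m, hc_le1 m, hw_pos m]
  -- log of the weight and its power series
  set g : ℕ → ℝ := fun m => -Real.log (c m) with hgdef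
  set a : ℕ → ℝ := fun k =>
    (r ^ k + (-(P' + q)) ^ k - (-D) ^ k - (-(N + q)) ^ k) / k with hadef
  have ha_nonneg : ∀ i : ℕ, 0 ≤ a (i + 1) := by
    intro i
    have h := coeff_ineq (i + 1) (Nat.le_add_left 1 i) (a := r) (b := -P') (d := -D) (q := q)
      (by linarith) (by linarith) (by rw [hrdef]; linarith) hq0 hqN
    rw [hadef]
    have h2 : r - q = -(N + q) := by rw [hrdef]; ring
    have h3 : -P' - q = -(P' + q) := by ring
    rw [h2, h3] at h
    apply div_nonneg _ (Nat.cast_nonneg _)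
    linarith
  have habs_pow : ∀ (x : ℝ) (k : ℕ), |x| ≤ r → |(-x) ^ k| ≤ r ^ k := by
    intro x k hx
    rw [abs_pow, abs_neg]
    exact pow_le_pow_left₀ (abs_nonneg x) hx k
  have ha_bound : ∀ i : ℕ, |a (i + 1)| ≤ 4 * r ^ (i + 1) := by
    intro i
    rw [hadef]
    have b1 : |r ^ (i+1)| = r ^ (i+1) := abs_of_nonneg (pow_nonneg hr0 _)
    have c2 := abs_le.mp (habs_pow (P' + q) (i+1) hPqb)
    have c3 := abs_le.mp (habs_pow D (i+1) hDb)
    have c4 := abs_le.mp (habs_pow (N + q) (i+1) hNqb)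
    have hnum : |r ^ (i+1) + (-(P' + q)) ^ (i+1) - (-D) ^ (i+1) - (-(N + q)) ^ (i+1)|
        ≤ 4 * r ^ (i+1) := by
      apply abs_le.mpr
      have hb := pow_nonneg hr0 (i+1)
      have b1' : r ^ (i+1) ≤ r ^ (i+1) := le_refl _
      constructor <;> linarith [c2.1, c2.2, c3.1, c3.2, c4.1, c4.2]
    rw [abs_div, Nat.abs_cast]
    have hcast : (1:ℝ) ≤ ((i+1 : ℕ) : ℝ) := by exact_mod_cast Nat.succ_le_succ (Nat.zero_le i)
    calc |r ^ (i+1) + (-(P' + q)) ^ (i+1) - (-D) ^ (i+1) - (-(N + q)) ^ (i+1)| / ((i+1 : ℕ) : ℝ)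
        ≤ (4 * r ^ (i+1)) / ((i+1 : ℕ) : ℝ) := by gcongr
      _ ≤ 4 * r ^ (i+1) := div_le_self (by positivity) hcast
  have hlog : ∀ z : ℝ, |z| < 1 →
      HasSum (fun i : ℕ => -((-z) ^ (i + 1) / (i + 1))) (Real.log (1 + z)) := by
    intro z hz
    have h := (Real.hasSum_pow_div_log_of_abs_lt_one (x := -z) (by rwa [abs_neg])).neg
    rw [sub_neg_eq_add] at h
    simpa using h
  have hcu : ∀ m : ℕ, c m = ((1 + N * t ^ m) * (1 + (P' + q) * t ^ m))
      / ((1 + D * t ^ m) * (1 + (N + q) * t ^ m)) := by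
    intro m
    have e : ∀ x : ℝ, p ^ m + x = p ^ m * (1 + x * t ^ m) := by
      intro x
      rw [mul_add, mul_one]
      congr 1
      rw [show p ^ m * (x * t ^ m) = x * (p ^ m * t ^ m) by ring, htpm m, mul_one]
    have k1 := hupos m N hNb
    have k2 := hupos m D hDb
    have k3 := hupos m (N + q) hNqb
    have k4 := hupos m (P' + q) hPqb
    have hpm : (0:ℝ) < p ^ m := by positivity
    rw [hcdef]
    show ((p ^ m + N) * (p ^ m + (P' + q))) / ((p ^ m + D) * (p ^ m + (N + q))) = _
    rw [e N, e D, e (N + q), e (P' + q),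
      div_eq_div_iff (mul_pos (mul_pos hpm k2) (mul_pos hpm k3)).ne' (mul_pos k2 k3).ne']
    ring
  have hsmall : ∀ (m : ℕ) (x : ℝ), |x| ≤ r → |x * t ^ m| < 1 := by
    intro m x hx
    rw [abs_mul, abs_of_nonneg (pow_nonneg ht0.le m)]
    calc |x| * t ^ m ≤ r * 1 := mul_le_mul hx (htpow1 m) (pow_nonneg ht0.le m) hr0
      _ < 1 := by rw [mul_one]; exact hr1
  have hgm : ∀ m : ℕ, HasSum (fun i : ℕ => a (i + 1) * (t ^ m) ^ (i + 1)) (g m) := by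
    intro m
    have k1 := hupos m N hNb
    have k2 := hupos m D hDb
    have k3 := hupos m (N + q) hNqb
    have k4 := hupos m (P' + q) hPqb
    have S1 := hlog (D * t ^ m) (hsmall m D hDb)
    have S2 := hlog ((N + q) * t ^ m) (hsmall m _ hNqb)
    have S3 := hlog (N * t ^ m) (hsmall m N hNb)
    have S4 := hlog ((P' + q) * t ^ m) (hsmall m _ hPqb)
    have hval : g m = Real.log (1 + D * t ^ m) + Real.log (1 + (N + q) * t ^ m)
        - (Real.log (1 + N * t ^ m) + Real.log (1 + (P' + q) * t ^ m)) := by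
      rw [hgdef]
      simp only []
      rw [hcu m, Real.log_div (by positivity) (by positivity),
        Real.log_mul k1.ne' k4.ne', Real.log_mul k2.ne' k3.ne']
      ring
    have H := (S1.add S2).sub (S3.add S4)
    rw [← hval] at H
    have hfun : (fun i : ℕ => -((-(D * t ^ m)) ^ (i+1) / (i+1))
          + -((-((N + q) * t ^ m)) ^ (i+1) / (i+1))
        - (-((-(N * t ^ m)) ^ (i+1) / (i+1)) + -((-((P' + q) * t ^ m)) ^ (i+1) / (i+1))))
        = (fun i : ℕ => a (i + 1) * (t ^ m) ^ (i + 1)) := by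
      funext i
      rw [hadef]
      simp only []
      rw [show (-(D * t ^ m)) = (-D) * t ^ m by ring,
          show (-((N + q) * t ^ m)) = (-(N + q)) * t ^ m by ring,
          show (-(N * t ^ m)) = (-N) * t ^ m by ring,
          show (-((P' + q) * t ^ m)) = (-(P' + q)) * t ^ m by ring,
          mul_pow, mul_pow, mul_pow, mul_pow, hrdef]
      have hi : ((i:ℝ) + 1) ≠ 0 := by positivity
      push_cast
      field_simp
      ring
    rw [hfun] at H
    exact H
  -- nonnegativity and geometric bound for g
  have hg_nonneg : ∀ m, 0 ≤ g m := by
    intro m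
    rw [hgdef]
    simp only []
    rw [neg_nonneg]
    exact Real.log_nonpos (hc_pos m).le (hc_le1 m)
  have hgbound : ∀ m, g m ≤ (4 * (1 - r)⁻¹) * t ^ m := by
    intro m
    have hrt : 0 ≤ r * t ^ m := mul_nonneg hr0 (pow_nonneg ht0.le m)
    have hrt1 : r * t ^ m < 1 := lt_of_le_of_lt (mul_le_of_le_one_right hr0 (htpow1 m)) hr1
    have hgeo : HasSum (fun i : ℕ => (4 * (r * t ^ m)) * (r * t ^ m) ^ i)
        ((4 * (r * t ^ m)) * (1 - r * t ^ m)⁻¹) :=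
      (hasSum_geometric_of_lt_one hrt hrt1).mul_left _
    have hle : g m ≤ (4 * (r * t ^ m)) * (1 - r * t ^ m)⁻¹ := by
      refine hasSum_le ?_ (hgm m) hgeo
      intro i
      have h1 : a (i+1) ≤ 4 * r ^ (i+1) := le_trans (le_abs_self _) (ha_bound i)
      have h2 : (0:ℝ) ≤ (t ^ m) ^ (i+1) := by positivity
      calc a (i+1) * (t ^ m) ^ (i+1) ≤ (4 * r ^ (i+1)) * (t ^ m) ^ (i+1) :=
            mul_le_mul_of_nonneg_right h1 h2
        _ = 4 * ((r * t ^ m) ^ (i+1)) := by rw [mul_pow]; ring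
        _ = (4 * (r * t ^ m)) * (r * t ^ m) ^ i := by rw [pow_succ]; ring
    have h3 : (1 - r * t ^ m)⁻¹ ≤ (1 - r)⁻¹ := by
      apply inv_anti₀ (by linarith)
      have : r * t ^ m ≤ r := mul_le_of_le_one_right hr0 (htpow1 m)
      linarith
    calc g m ≤ (4 * (r * t ^ m)) * (1 - r * t ^ m)⁻¹ := hle
      _ ≤ (4 * (1 * t ^ m)) * (1 - r)⁻¹ := by
          apply mul_le_mul _ h3 (inv_nonneg.mpr (by linarith)) (by positivity)
          nlinarith [pow_nonneg ht0.le m]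
      _ = (4 * (1 - r)⁻¹) * t ^ m := by ring
  have hgsum : Summable g :=
    Summable.of_nonneg_of_le hg_nonneg hgbound
      ((summable_geometric_of_lt_one ht0.le ht1).mul_left _)
  -- the coefficient sequence b and node sequence y
  set y : ℕ → ℝ := fun k => t ^ k with hydef
  set b : ℕ → ℝ := fun k => if k = 0 then 0 else s * a k * (1 - t ^ k)⁻¹ with hbdef
  have htk1 : ∀ k : ℕ, t ^ (k + 1) < 1 := by
    intro k
    calc t ^ (k+1) ≤ t ^ 1 := pow_le_pow_of_le_one ht0.le ht1.le (Nat.le_add_left 1 k)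
      _ < 1 := by rw [pow_one]; exact ht1
  have hb_nonneg : ∀ k, 0 ≤ b k := by
    intro k
    rw [hbdef]
    cases k with
    | zero => simp
    | succ i =>
      simp only [Nat.succ_ne_zero, if_false]
      have h3 : (0:ℝ) < 1 - t ^ (i+1) := by linarith [htk1 i]
      exact mul_nonneg (mul_nonneg hs.le (ha_nonneg i)) (inv_nonneg.mpr h3.le)
  have hb_le : ∀ k, b k ≤ (s * (4 * (1 - t)⁻¹)) * r ^ k := by
    intro k
    rw [hbdef]
    cases k with
    | zero =>
      simp only [if_pos rfl, pow_zero, mul_one]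
      exact mul_nonneg hs.le (mul_nonneg (by norm_num) (inv_nonneg.mpr (by linarith)))
    | succ i =>
      simp only [Nat.succ_ne_zero, if_false]
      have h1 : a (i+1) ≤ 4 * r ^ (i+1) := le_trans (le_abs_self _) (ha_bound i)
      have h3 : (0:ℝ) < 1 - t ^ (i+1) := by linarith [htk1 i]
      have h2 : (1 - t ^ (i+1))⁻¹ ≤ (1 - t)⁻¹ := by
        apply inv_anti₀ (by linarith)
        have : t ^ (i+1) ≤ t := by
          calc t ^ (i+1) ≤ t ^ 1 := pow_le_pow_of_le_one ht0.le ht1.le (Nat.le_add_left 1 i)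
            _ = t := pow_one t
        linarith
      calc s * a (i+1) * (1 - t ^ (i+1))⁻¹ ≤ s * (4 * r ^ (i+1)) * (1 - t)⁻¹ := by
            apply mul_le_mul (mul_le_mul_of_nonneg_left h1 hs.le) h2 (inv_nonneg.mpr h3.le)
              (by positivity)
        _ = (s * (4 * (1 - t)⁻¹)) * r ^ (i+1) := by ring
  have hbs : Summable b :=
    Summable.of_nonneg_of_le hb_nonneg hb_le
      ((summable_geometric_of_lt_one hr0 hr1).mul_left _)
  have hy0' : ∀ k, 0 ≤ y k := by
    intro k; rw [hydef]; positivity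
  have hy1' : ∀ k, y k ≤ 1 := by
    intro k; rw [hydef]; exact htpow1 k
  set T : ℝ := ∑' j, g j with hTdef
  set C : ℝ := Real.exp (-(s * T)) with hCdef
  -- the moment formula
  have hmom : ∀ n : ℕ, moments (fun m => w m ^ s) n = C * Real.exp (∑' k, b k * y k ^ n) := by
    intro n
    set F : ℕ × ℕ → ℝ := fun jk => a (jk.2 + 1) * (t ^ (n + jk.1)) ^ (jk.2 + 1) with hFdef
    have hFsum : Summable F := by
      apply Summable.of_norm_bounded (g := fun jk : ℕ × ℕ => (t ^ jk.1) * (4 * r ^ (jk.2 + 1)))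
      · exact Summable.mul_of_nonneg (f := fun j : ℕ => t ^ j) (g := fun k : ℕ => 4 * r ^ (k + 1))
          (summable_geometric_of_lt_one ht0.le ht1)
          (Summable.congr ((summable_geometric_of_lt_one hr0 hr1).mul_left (4 * r))
            (fun k => by ring))
          (fun j => by positivity) (fun k => by positivity)
      · intro jk
        rw [hFdef]
        simp only []
        rw [norm_mul, Real.norm_eq_abs, Real.norm_eq_abs,
          abs_of_nonneg (by positivity : (0:ℝ) ≤ (t ^ (n + jk.1)) ^ (jk.2 + 1))]
        have hb1 : (t ^ (n + jk.1)) ^ (jk.2 + 1) ≤ t ^ jk.1 := by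
          rw [← pow_mul]
          apply pow_le_pow_of_le_one ht0.le ht1.le
          calc jk.1 ≤ n + jk.1 := Nat.le_add_left _ _
            _ ≤ (n + jk.1) * (jk.2 + 1) := Nat.le_mul_of_pos_right _ (Nat.succ_pos _)
        calc |a (jk.2 + 1)| * (t ^ (n + jk.1)) ^ (jk.2 + 1)
            ≤ (4 * r ^ (jk.2 + 1)) * (t ^ jk.1) := by
              apply mul_le_mul (ha_bound _) hb1 (by positivity) (by positivity)
          _ = (t ^ jk.1) * (4 * r ^ (jk.2 + 1)) := by ring
    have hrow : ∀ j : ℕ, HasSum (fun k => F (j, k)) (g (n + j)) := fun j => hgm (n + j)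
    have hcol : ∀ k : ℕ, HasSum (fun j => F (j, k))
        ((a (k + 1) * (t ^ (k + 1)) ^ n) * (1 - t ^ (k + 1))⁻¹) := by
      intro k
      have hgeo := (hasSum_geometric_of_lt_one (pow_nonneg ht0.le (k+1)) (htk1 k)).mul_left
        (a (k + 1) * (t ^ (k + 1)) ^ n)
      have hfe : (fun j : ℕ => (a (k + 1) * (t ^ (k + 1)) ^ n) * (t ^ (k + 1)) ^ j)
          = fun j => F (j, k) := by
        funext j
        rw [hFdef]
        simp only []
        rw [mul_assoc, ← pow_add, ← pow_mul, ← pow_mul, Nat.mul_comm]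
      rw [hfe] at hgeo
      exact hgeo
    have hswap : ∑' j, g (n + j)
        = ∑' k, ((a (k + 1) * (t ^ (k + 1)) ^ n) * (1 - t ^ (k + 1))⁻¹) := by
      have h1 : ∑' j, g (n + j) = ∑' j, ∑' k, F (j, k) :=
        tsum_congr fun j => ((hrow j).tsum_eq).symm
      have h2 : ∑' (k) (j), F (j, k) = ∑' (j) (k), F (j, k) :=
        Summable.tsum_comm (f := fun j k => F (j, k)) hFsum
      have h3 : ∑' k, ((a (k + 1) * (t ^ (k + 1)) ^ n) * (1 - t ^ (k + 1))⁻¹)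
          = ∑' (k) (j), F (j, k) := tsum_congr fun k => ((hcol k).tsum_eq).symm
      rw [h1, h3, h2]
    have hsum_bn : Summable (fun k => b k * y k ^ n) := by
      apply Summable.of_nonneg_of_le
        (fun k => mul_nonneg (hb_nonneg k) (pow_nonneg (hy0' k) n)) (fun k => ?_) hbs
      exact mul_le_of_le_one_right (hb_nonneg k) (pow_le_one₀ (hy0' k) (hy1' k))
    have hbn_eq : ∑' k, b k * y k ^ n = s * ∑' j, g (n + j) := by
      rw [Summable.tsum_eq_zero_add hsum_bn]
      have hb00 : b 0 * y 0 ^ n = 0 := by rw [hbdef]; simp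
      have hterm : ∀ i : ℕ, b (i + 1) * y (i + 1) ^ n
          = s * ((a (i + 1) * (t ^ (i + 1)) ^ n) * (1 - t ^ (i + 1))⁻¹) := by
        intro i
        rw [hbdef, hydef]
        simp only [Nat.succ_ne_zero, if_false]
        ring
      rw [hb00, zero_add, tsum_congr hterm, tsum_mul_left, ← hswap]
    have hsum_part : ∑ j ∈ Finset.range n, g j = T - ∑' j, g (n + j) := by
      have h := Summable.sum_add_tsum_nat_add (f := g) n hgsum
      have h2 : ∑' i, g (i + n) = ∑' j, g (n + j) := tsum_congr fun i => by rw [Nat.add_comm]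
      rw [h2] at h
      rw [hTdef]
      linarith
    have hfac : ∀ j : ℕ, ((w j) ^ s) ^ 2 = Real.exp (-(s * g j)) := by
      intro j
      have h1 : ((w j) ^ s) ^ (2:ℕ) = ((w j) ^ (2:ℕ) : ℝ) ^ s := by
        rw [← Real.rpow_natCast ((w j) ^ s) 2, ← Real.rpow_mul (hw_pos j).le,
          ← Real.rpow_natCast (w j) 2, ← Real.rpow_mul (hw_pos j).le, mul_comm]
      rw [h1, hw_sq j, Real.rpow_def_of_pos (hc_pos j)]
      congr 1
      rw [hgdef]
      simp only []
      ring
    have hmm2 : moments (fun m => w m ^ s) n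
        = Real.exp (-(s * ∑ j ∈ Finset.range n, g j)) := by
      show ∏ j ∈ Finset.range n, ((w j) ^ s) ^ 2 = _
      rw [Finset.prod_congr rfl (fun j _ => hfac j), ← Real.exp_sum]
      congr 1
      rw [Finset.mul_sum, ← Finset.sum_neg_distrib]
    rw [hmm2, hsum_part, hbn_eq, hCdef,
      show -(s * (T - ∑' j, g (n + j))) = -(s * T) + s * ∑' j, g (n + j) by ring,
      Real.exp_add]
  -- final assembly
  obtain ⟨μ, hfin, hK, hint⟩ := core_measure C (Real.exp_nonneg _) b hb_nonneg hbs y hy0' hy1'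
  refine ⟨fun n => Real.rpow_pos_of_pos (hw_pos n) s,
    ⟨1, fun n => Real.rpow_le_one (hw_pos n).le (hw_le1 n) hs.le⟩,
    μ, hfin, hK, ?_⟩
  intro n
  show moments (fun m => w m ^ s) n = ∫ x, x ^ n ∂μ
  rw [hmom n]
  exact (hint n).symm
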